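/- arXiv:2512.19572 — 5 statements merged into one kernel-verified Lean document; each statement's English description precedes it below -/
import Mathlib

section
/- Let 𝒜 denote the set of probability measures μ on Ω with μ(X_j) = M_j for every j = 1,…,K. For each j let X*_j be a measurable subset of Ω with X*_j ⊆ X_j. Then the infimum over μ ∈ 𝒜 of the sum Σ_{j=1}^K μ(X*_j) equals the sum of the infima: inf_{μ∈𝒜} Σ_{j=1}^K μ(X*_j) = Σ_{j=1}^K inf_{μ∈𝒜} μ(X*_j). -/
open MeasureTheory

/-- OUQ under zeroth-order moment constraints: the infimum over the admissible
set of the sum of the measures of the subsets equals the sum of the infima. -/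
theorem inf_sum_eq_sum_inf
    {Ω : Type*} [MeasurableSpace Ω] [MeasurableSingletonClass Ω]
    (K : ℕ) (hK : 0 < K)
    (X : Fin K → Set Ω)
    (hXne : ∀ j, (X j).Nonempty)
    (hXmeas : ∀ j, MeasurableSet (X j))
    (hXdisj : Pairwise (Function.onFun Disjoint X))
    (hXcover : (⋃ j, X j) = Set.univ)
    (M : Fin K → ℝ) (hM0 : ∀ j, 0 ≤ M j) (hM1 : ∑ j, M j = 1)
    (Xs : Fin K → Set Ω)
    (hXsmeas : ∀ j, MeasurableSet (Xs j))
    (hXssub : ∀ j, Xs j ⊆ X j) :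
    (⨅ μ ∈ {μ : Measure Ω | IsProbabilityMeasure μ ∧
        ∀ j, μ (X j) = ENNReal.ofReal (M j)}, ∑ j, μ (Xs j))
      = ∑ j, ⨅ μ ∈ {μ : Measure Ω | IsProbabilityMeasure μ ∧
        ∀ j, μ (X j) = ENNReal.ofReal (M j)}, μ (Xs j) := by
  classical
  set S : Set (Measure Ω) := {μ : Measure Ω | IsProbabilityMeasure μ ∧
        ∀ j, μ (X j) = ENNReal.ofReal (M j)} with hSdef
  have hex : ∀ j : Fin K, ∃ x : Ω, x ∈ X j ∧ (x ∈ Xs j → X j ⊆ Xs j) := by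
    intro j
    by_cases h : (X j \ Xs j).Nonempty
    · obtain ⟨x, hx⟩ := h
      exact ⟨x, hx.1, fun hxin => absurd hxin hx.2⟩
    · obtain ⟨x, hx⟩ := hXne j
      refine ⟨x, hx, fun _ y hy => ?_⟩
      by_contra hny
      exact h ⟨y, hy, hny⟩
  choose x hx hxs using hex
  set μ : Measure Ω := Measure.sum (fun j => (ENNReal.ofReal (M j)) • Measure.dirac (x j))
    with hμdef
  have hμapp : ∀ s : Set Ω, MeasurableSet s →
      μ s = ∑ j, ENNReal.ofReal (M j) * s.indicator 1 (x j) := by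
    intro s hs
    rw [hμdef, Measure.sum_apply _ hs, tsum_fintype]
    refine Finset.sum_congr rfl fun j _ => ?_
    rw [Measure.smul_apply, smul_eq_mul, Measure.dirac_apply]
  have hμX : ∀ i, μ (X i) = ENNReal.ofReal (M i) := by
    intro i
    rw [hμapp _ (hXmeas i)]
    rw [Finset.sum_eq_single i]
    · rw [Set.indicator_of_mem (hx i), Pi.one_apply, mul_one]
    · intro j _ hj
      have : x j ∉ X i := fun hmem =>
        (hXdisj hj).le_bot (Set.mem_inter (hx j) hmem)
      rw [Set.indicator_of_notMem this, mul_zero]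
    · intro h; exact absurd (Finset.mem_univ i) h
  have hμprob : IsProbabilityMeasure μ := by
    constructor
    rw [hμapp _ MeasurableSet.univ]
    have : ∀ j : Fin K, ENNReal.ofReal (M j) * Set.indicator Set.univ 1 (x j)
        = ENNReal.ofReal (M j) := by
      intro j
      rw [Set.indicator_of_mem (Set.mem_univ _), Pi.one_apply, mul_one]
    rw [Finset.sum_congr rfl fun j _ => this j,
      ← ENNReal.ofReal_sum_of_nonneg fun j _ => hM0 j, hM1, ENNReal.ofReal_one]
  have hμS : μ ∈ S := ⟨hμprob, hμX⟩
  have hμmin : ∀ j, ∀ ν ∈ S, μ (Xs j) ≤ ν (Xs j) := by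
    intro j ν hν
    by_cases hmem : x j ∈ Xs j
    · have heq : Xs j = X j := le_antisymm (hXssub j) (hxs j hmem)
      rw [heq, hμX j, hν.2 j]
    · rw [hμapp _ (hXsmeas j), Finset.sum_eq_single j]
      · rw [Set.indicator_of_notMem hmem, mul_zero]; exact zero_le
      · intro i _ hi
        have : x i ∉ Xs j := fun h =>
          (hXdisj hi).le_bot (Set.mem_inter (hx i) (hXssub j h))
        rw [Set.indicator_of_notMem this, mul_zero]
      · intro h; exact absurd (Finset.mem_univ j) h
  apply le_antisymm
  · calc (⨅ ν ∈ S, ∑ j, ν (Xs j)) ≤ ∑ j, μ (Xs j) := biInf_le _ hμS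
      _ = ∑ j, ⨅ ν ∈ S, ν (Xs j) := Finset.sum_congr rfl fun j _ =>
            le_antisymm (le_iInf₂ fun ν hν => hμmin j ν hν) (biInf_le _ hμS)
  · exact le_iInf₂ fun ν hν => Finset.sum_le_sum fun j _ => biInf_le _ hν
end

section
/- Let 𝒜 denote the set of probability measures μ on Ω with μ(X_j) = M_j for every j = 1,…,K, and for a fixed index j let 𝒜_j denote the set of probability measures μ on Ω satisfying only the single constraint μ(X_j) = M_j. Let X*_j be a measurable subset of Ω with X*_j ⊆ X_j. Then sup_{μ∈𝒜} μ(X*_j) = sup_{μ∈𝒜_j} μ(X*_j). -/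
open MeasureTheory

/-- The supremum of `μ (Xs)` over measures satisfying all the subdomain mass
constraints equals the supremum over measures satisfying only the single
constraint on the subdomain `X j` containing `Xs`. -/
theorem sup_all_constraints_eq_sup_single_constraint
    {Ω : Type*} [MeasurableSpace Ω] [MeasurableSingletonClass Ω]
    (K : ℕ) (hK : 0 < K)
    (X : Fin K → Set Ω)
    (hXne : ∀ j, (X j).Nonempty)
    (hXmeas : ∀ j, MeasurableSet (X j))
    (hXdisj : Pairwise (Function.onFun Disjoint X))
    (hXcover : (⋃ j, X j) = Set.univ)
    (M : Fin K → ℝ) (hM0 : ∀ j, 0 ≤ M j) (hM1 : ∑ j, M j = 1)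
    (j : Fin K) (Xs : Set Ω)
    (hXsmeas : MeasurableSet Xs)
    (hXssub : Xs ⊆ X j) :
    (⨆ μ ∈ {μ : Measure Ω | IsProbabilityMeasure μ ∧
        ∀ l, μ (X l) = ENNReal.ofReal (M l)}, μ Xs)
      = ⨆ μ ∈ {μ : Measure Ω | IsProbabilityMeasure μ ∧
        μ (X j) = ENNReal.ofReal (M j)}, μ Xs := by
  classical
  apply le_antisymm
  · refine iSup_le fun μ => iSup_le fun hμ => ?_
    exact le_biSup (fun μ : Measure Ω => μ Xs) (⟨hμ.1, hμ.2 j⟩ : _ ∧ _)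
  · refine iSup_le fun μ => iSup_le fun hμ => ?_
    obtain ⟨hprob, hμj⟩ := hμ
    choose x hx using hXne
    have hxnot : ∀ l l', l ≠ l' → x l ∉ X l' := fun l l' h hmem =>
      Set.disjoint_left.mp (hXdisj h) (hx l) hmem
    set ν : Measure Ω := μ.restrict (X j) +
      ∑ l ∈ Finset.univ.erase j, (ENNReal.ofReal (M l)) • Measure.dirac (x l) with hν
    have happly : ∀ S : Set Ω, MeasurableSet S →
        ν S = μ (S ∩ X j) + ∑ l ∈ Finset.univ.erase j,
          ENNReal.ofReal (M l) * S.indicator (1 : Ω → ENNReal) (x l) := by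
      intro S hS
      rw [hν]
      simp [Measure.restrict_apply hS, Measure.finset_sum_apply,
        Measure.dirac_apply' _ hS]
    -- ν (X l) = M l for all l
    have hνXl : ∀ l, ν (X l) = ENNReal.ofReal (M l) := by
      intro l
      rw [happly (X l) (hXmeas l)]
      by_cases h : l = j
      · subst h
        have : ∀ l' ∈ Finset.univ.erase l,
            ENNReal.ofReal (M l') * (X l).indicator (1 : Ω → ENNReal) (x l') = 0 := by
          intro l' hl'
          have : x l' ∉ X l := hxnot l' l (Finset.ne_of_mem_erase hl')
          simp [Set.indicator_of_notMem this]
        rw [Finset.sum_eq_zero this, Set.inter_self, hμj, add_zero]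
      · have hinter : X l ∩ X j = ∅ := by
          exact Set.disjoint_iff_inter_eq_empty.mp (hXdisj h)
        rw [hinter]
        rw [Finset.sum_eq_single l]
        · simp [Set.indicator_of_mem (hx l)]
        · intro l' hl' hne
          have : x l' ∉ X l := hxnot l' l hne
          simp [Set.indicator_of_notMem this]
        · intro habs
          exact absurd (Finset.mem_erase.mpr ⟨h, Finset.mem_univ l⟩) habs
    -- ν is a probability measure
    have hνprob : IsProbabilityMeasure ν := by
      constructor
      rw [happly Set.univ MeasurableSet.univ]
      simp only [Set.univ_inter, Set.indicator_univ, Pi.one_apply, mul_one]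
      rw [hμj]
      rw [← ENNReal.ofReal_sum_of_nonneg (fun l _ => hM0 l)]
      rw [← ENNReal.ofReal_add (hM0 j) (Finset.sum_nonneg (fun l _ => hM0 l))]
      rw [Finset.add_sum_erase _ M (Finset.mem_univ j), hM1]
      simp
    -- ν Xs = μ Xs
    have hνXs : ν Xs = μ Xs := by
      rw [happly Xs hXsmeas]
      have : ∀ l' ∈ Finset.univ.erase j,
          ENNReal.ofReal (M l') * Xs.indicator (1 : Ω → ENNReal) (x l') = 0 := by
        intro l' hl'
        have : x l' ∉ Xs := fun hmem => hxnot l' j (Finset.ne_of_mem_erase hl') (hXssub hmem)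
        simp [Set.indicator_of_notMem this]
      rw [Finset.sum_eq_zero this, Set.inter_eq_self_of_subset_left hXssub, add_zero]
    calc μ Xs = ν Xs := hνXs.symm
      _ ≤ _ := le_biSup (fun μ : Measure Ω => μ Xs) (⟨hνprob, hνXl⟩ : _ ∧ _)
end

section
/- Let 𝒜 denote the set of probability measures μ on Ω with μ(X_j) = M_j for every j = 1,…,K, and let C be a measurable subset of Ω (the failure set). Then the optimal lower bound on the failure probability satisfies inf_{μ∈𝒜} μ(C) = Σ_{j=1}^K M_j · 1[X_j ⊆ C], where 1[·] denotes the indicator of the stated condition. -/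
open MeasureTheory
open scoped Classical

/-- Optimal lower bound on the probability of failure under zeroth-order
moment constraints on subdomains: it equals the sum of the masses of all
subdomains entirely contained in the failure set. -/
theorem inf_failure_probability
    {Ω : Type*} [MeasurableSpace Ω] [MeasurableSingletonClass Ω]
    (K : ℕ) (hK : 0 < K)
    (X : Fin K → Set Ω)
    (hXne : ∀ j, (X j).Nonempty)
    (hXmeas : ∀ j, MeasurableSet (X j))
    (hXdisj : Pairwise (Function.onFun Disjoint X))
    (hXcover : (⋃ j, X j) = Set.univ)
    (M : Fin K → ℝ) (hM0 : ∀ j, 0 ≤ M j) (hM1 : ∑ j, M j = 1)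
    (C : Set Ω) (hC : MeasurableSet C) :
    (⨅ μ ∈ {μ : Measure Ω | IsProbabilityMeasure μ ∧
        ∀ j, μ (X j) = ENNReal.ofReal (M j)}, μ C)
      = ∑ j, if X j ⊆ C then ENNReal.ofReal (M j) else 0 := by
  classical
  -- choose witness points
  have hpt : ∀ j, ∃ p : Ω, p ∈ X j ∧ ((X j ⊆ C) → p ∈ C) ∧ (¬ X j ⊆ C → p ∉ C) := by
    intro j
    by_cases h : X j ⊆ C
    · obtain ⟨p, hp⟩ := hXne j
      exact ⟨p, hp, fun _ => h hp, fun hc => absurd h hc⟩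
    · obtain ⟨p, hp1, hp2⟩ := Set.not_subset.mp h
      exact ⟨p, hp1, fun hc => absurd hc h, fun _ => hp2⟩
  choose x hx1 hx2 hx3 using hpt
  set μ0 : Measure Ω := ∑ j, ENNReal.ofReal (M j) • Measure.dirac (x j) with hμ0
  have happ : ∀ s : Set Ω,
      μ0 s = ∑ j, ENNReal.ofReal (M j) * Set.indicator s 1 (x j) := by
    intro s
    simp [hμ0, Measure.finset_sum_apply, Measure.dirac_apply, smul_eq_mul]
  have hμ0X : ∀ i, μ0 (X i) = ENNReal.ofReal (M i) := by
    intro i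
    rw [happ]
    rw [Finset.sum_eq_single i]
    · rw [Set.indicator_of_mem (hx1 i)]; simp
    · intro j _ hji
      have : x j ∉ X i := fun hmem =>
        (Set.disjoint_left.mp (hXdisj hji)) (hx1 j) hmem
      rw [Set.indicator_of_notMem this, mul_zero]
    · intro h; exact absurd (Finset.mem_univ i) h
  have hprob : IsProbabilityMeasure μ0 := by
    constructor
    rw [happ]
    simp only [Set.indicator_of_mem (Set.mem_univ _), Pi.one_apply, mul_one]
    rw [← ENNReal.ofReal_sum_of_nonneg (fun j _ => hM0 j), hM1, ENNReal.ofReal_one]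
  have hμ0C : μ0 C = ∑ j, if X j ⊆ C then ENNReal.ofReal (M j) else 0 := by
    rw [happ]
    apply Finset.sum_congr rfl
    intro j _
    by_cases h : X j ⊆ C
    · rw [if_pos h, Set.indicator_of_mem (hx2 j h)]; simp
    · rw [if_neg h, Set.indicator_of_notMem (hx3 j h), mul_zero]
  apply le_antisymm
  · calc (⨅ μ ∈ {μ : Measure Ω | IsProbabilityMeasure μ ∧
        ∀ j, μ (X j) = ENNReal.ofReal (M j)}, μ C) ≤ μ0 C :=
          iInf₂_le μ0 ⟨hprob, hμ0X⟩
      _ = _ := hμ0C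
  · apply le_iInf₂
    rintro μ ⟨hμprob, hμX⟩
    have hCdecomp : C = ⋃ j, X j ∩ C := by
      rw [← Set.iUnion_inter, hXcover, Set.univ_inter]
    have hdisj : Pairwise (Function.onFun Disjoint fun j => X j ∩ C) := by
      intro i j hij
      exact Disjoint.mono Set.inter_subset_left Set.inter_subset_left (hXdisj hij)
    have key : μ C = ∑ j, μ (X j ∩ C) := by
      conv_lhs => rw [hCdecomp]
      rw [measure_iUnion hdisj (fun j => (hXmeas j).inter hC), tsum_fintype]
    rw [key]
    apply Finset.sum_le_sum
    intro j _
    by_cases h : X j ⊆ C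
    · rw [if_pos h, ← hμX j]
      exact measure_mono (by rw [Set.inter_eq_left.mpr h]) |>.ge.le
    · rw [if_neg h]; exact zero_le
end

section
/- Let 𝒜 denote the set of all product probability measures μ = ⊗_{i=1}^m μ_i on Ω_1 × ⋯ × Ω_m such that each μ_i is a probability measure on Ω_i satisfying μ_i(X_{i,j}) = M_{i,j} for every j = 1,…,K. For each i let C_i be a measurable subset of Ω_i, and let C = C_1 × ⋯ × C_m. Then sup_{μ∈𝒜} μ(C) = Π_{i=1}^m Σ_{j=1}^K M_{i,j} · 1[C_i ∩ X_{i,j} ≠ ∅], where 1[·] denotes the indicator of the stated condition. -/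
open MeasureTheory
open scoped Classical

/-- Optimal upper bound on the failure probability for a product of
independent inputs, each constrained by zeroth-order moments on subdomains:
the supremum of `μ (C₁ × ⋯ × С_m)` over all admissible product measures
equals the product over `i` of the sums of the masses of the subdomains
intersecting `C i`. -/
theorem sup_failure_probability_product
    (m K : ℕ) (hm : 0 < m) (hK : 0 < K)
    (Ω : Fin m → Type*) [∀ i, MeasurableSpace (Ω i)]
    [∀ i, MeasurableSingletonClass (Ω i)]
    (X : ∀ i, Fin K → Set (Ω i))
    (hXne : ∀ i j, (X i j).Nonempty)
    (hXmeas : ∀ i j, MeasurableSet (X i j))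
    (hXdisj : ∀ i, Pairwise (Function.onFun Disjoint (X i)))
    (hXcover : ∀ i, (⋃ j, X i j) = Set.univ)
    (M : Fin m → Fin K → ℝ)
    (hM0 : ∀ i j, 0 ≤ M i j) (hM1 : ∀ i, ∑ j, M i j = 1)
    (C : ∀ i, Set (Ω i)) (hC : ∀ i, MeasurableSet (C i)) :
    (⨆ μ ∈ {μ : Measure (∀ i, Ω i) | ∃ ν : ∀ i, Measure (Ω i),
        (∀ i, IsProbabilityMeasure (ν i)) ∧
        (∀ i j, ν i (X i j) = ENNReal.ofReal (M i j)) ∧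
        μ = Measure.pi ν}, μ (Set.pi Set.univ C))
      = ∏ i, ∑ j, if (C i ∩ X i j).Nonempty then ENNReal.ofReal (M i j) else 0 := by
  apply le_antisymm
  · -- upper bound
    refine iSup₂_le fun μ hμ => ?_
    obtain ⟨ν, hprob, hX, rfl⟩ := hμ
    rw [Measure.pi_pi]
    refine Finset.prod_le_prod' fun i _ => ?_
    have hCi : C i = ⋃ j, C i ∩ X i j := by
      rw [← Set.inter_iUnion, hXcover i, Set.inter_univ]
    calc ν i (C i) ≤ ∑ j, ν i (C i ∩ X i j) := by
          conv_lhs => rw [hCi]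
          exact measure_iUnion_fintype_le (ν i) (fun j => C i ∩ X i j)
      _ ≤ ∑ j, if (C i ∩ X i j).Nonempty then ENNReal.ofReal (M i j) else 0 := by
          refine Finset.sum_le_sum fun j _ => ?_
          by_cases h : (C i ∩ X i j).Nonempty
          · rw [if_pos h, ← hX i j]
            exact measure_mono Set.inter_subset_right
          · rw [if_neg h, Set.not_nonempty_iff_eq_empty.mp h]
            simp
  · -- lower bound: construct the optimal measure
    set x : ∀ i, Fin K → Ω i := fun i j =>
      if h : (C i ∩ X i j).Nonempty then h.choose else (hXne i j).choose with hx
    have hxX : ∀ i j, x i j ∈ X i j := by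
      intro i j
      by_cases h : (C i ∩ X i j).Nonempty
      · simp only [hx, dif_pos h]; exact h.choose_spec.2
      · simp only [hx, dif_neg h]; exact (hXne i j).choose_spec
    have hxC : ∀ i j, x i j ∈ C i ↔ (C i ∩ X i j).Nonempty := by
      intro i j
      constructor
      · intro h; exact ⟨x i j, h, hxX i j⟩
      · intro h; simp only [hx, dif_pos h]; exact h.choose_spec.1
    set ν : ∀ i, Measure (Ω i) := fun i =>
      ∑ j, ENNReal.ofReal (M i j) • Measure.dirac (x i j) with hν
    have hν_apply : ∀ i (s : Set (Ω i)),
        ν i s = ∑ j, ENNReal.ofReal (M i j) * s.indicator 1 (x i j) := by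
      intro i s
      simp [hν, Measure.finset_sum_apply, Measure.smul_apply, Measure.dirac_apply,
        smul_eq_mul]
    have hνX : ∀ i j, ν i (X i j) = ENNReal.ofReal (M i j) := by
      intro i j
      rw [hν_apply]
      rw [Finset.sum_eq_single j]
      · simp [Set.indicator_of_mem (hxX i j)]
      · intro k _ hkj
        have : x i k ∉ X i j := fun hmem =>
          (hXdisj i hkj).le_bot ⟨hxX i k, hmem⟩
        simp [Set.indicator_of_notMem this]
      · simp
    have hνprob : ∀ i, IsProbabilityMeasure (ν i) := by
      intro i
      constructor
      rw [hν_apply]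
      simp only [Set.indicator_univ, Pi.one_apply, mul_one]
      rw [← ENNReal.ofReal_sum_of_nonneg fun j _ => hM0 i j, hM1 i,
        ENNReal.ofReal_one]
    have hνC : ∀ i, ν i (C i) =
        ∑ j, if (C i ∩ X i j).Nonempty then ENNReal.ofReal (M i j) else 0 := by
      intro i
      rw [hν_apply]
      refine Finset.sum_congr rfl fun j _ => ?_
      by_cases h : (C i ∩ X i j).Nonempty
      · rw [if_pos h, Set.indicator_of_mem ((hxC i j).mpr h)]
        simp
      · rw [if_neg h, Set.indicator_of_notMem (fun hmem => h ((hxC i j).mp hmem))]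
        simp
    have hmem : Measure.pi ν ∈ {μ : Measure (∀ i, Ω i) | ∃ ν' : ∀ i, Measure (Ω i),
        (∀ i, IsProbabilityMeasure (ν' i)) ∧
        (∀ i j, ν' i (X i j) = ENNReal.ofReal (M i j)) ∧
        μ = Measure.pi ν'} := ⟨ν, hνprob, hνX, rfl⟩
    refine le_iSup₂_of_le (Measure.pi ν) hmem ?_
    rw [Measure.pi_pi]
    exact le_of_eq (Finset.prod_congr rfl fun i _ => (hνC i).symm)
end

section
/- Let 𝒜 denote the set of all product probability measures μ = ⊗_{i=1}^m μ_i on Ω_1 × ⋯ × Ω_m such that each μ_i is a probability measure on Ω_i satisfying μ_i(X_{i,j}) = M_{i,j} for every j = 1,…,K. For each i let C_i be a measurable subset of Ω_i, and let C = C_1 × ⋯ × C_m. Then inf_{μ∈𝒜} μ(C) = Π_{i=1}^m Σ_{j=1}^K M_{i,j} · 1[X_{i,j} ⊆ C_i], where 1[·] denotes the indicator of the stated condition. -/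
open MeasureTheory
open scoped Classical

/-- Optimal lower bound on the failure probability for a product of
independent inputs, each constrained by zeroth-order moments on subdomains:
the infimum of `μ (C₁ × ⋯ × С_m)` over all admissible product measures
equals the product over `i` of the sums of the masses of the subdomains
contained in `C i`. -/
theorem inf_failure_probability_product
    (m K : ℕ) (hm : 0 < m) (hK : 0 < K)
    (Ω : Fin m → Type*) [∀ i, MeasurableSpace (Ω i)]
    [∀ i, MeasurableSingletonClass (Ω i)]
    (X : ∀ i, Fin K → Set (Ω i))
    (hXne : ∀ i j, (X i j).Nonempty)
    (hXmeas : ∀ i j, MeasurableSet (X i j))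
    (hXdisj : ∀ i, Pairwise (Function.onFun Disjoint (X i)))
    (hXcover : ∀ i, (⋃ j, X i j) = Set.univ)
    (M : Fin m → Fin K → ℝ)
    (hM0 : ∀ i j, 0 ≤ M i j) (hM1 : ∀ i, ∑ j, M i j = 1)
    (C : ∀ i, Set (Ω i)) (hC : ∀ i, MeasurableSet (C i)) :
    (⨅ μ ∈ {μ : Measure (∀ i, Ω i) | ∃ ν : ∀ i, Measure (Ω i),
        (∀ i, IsProbabilityMeasure (ν i)) ∧
        (∀ i j, ν i (X i j) = ENNReal.ofReal (M i j)) ∧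
        μ = Measure.pi ν}, μ (Set.pi Set.univ C))
      = ∏ i, ∑ j, if X i j ⊆ C i then ENNReal.ofReal (M i j) else 0 := by
  classical
  -- choose witness points
  have hpex : ∀ i j, ∃ x, x ∈ X i j ∧ (¬ X i j ⊆ C i → x ∉ C i) := by
    intro i j
    by_cases h : X i j ⊆ C i
    · exact ⟨(hXne i j).choose, (hXne i j).choose_spec, fun h' => absurd h h'⟩
    · obtain ⟨x, hx, hxc⟩ := Set.not_subset.mp h
      exact ⟨x, hx, fun _ => hxc⟩
  choose p hpX hpC using hpex
  set ν : ∀ i, Measure (Ω i) :=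
    fun i => ∑ j, ENNReal.ofReal (M i j) • Measure.dirac (p i j) with hν
  have hνapp : ∀ i (s : Set (Ω i)),
      ν i s = ∑ j, ENNReal.ofReal (M i j) * s.indicator 1 (p i j) := by
    intro i s
    simp [hν, Measure.coe_finset_sum, Measure.smul_apply, Measure.dirac_apply,
      smul_eq_mul, Finset.sum_apply]
  have hνX : ∀ i j, ν i (X i j) = ENNReal.ofReal (M i j) := by
    intro i j
    rw [hνapp]
    rw [Finset.sum_eq_single j]
    · simp [Set.indicator_of_mem (hpX i j)]
    · intro j' _ hne
      have : p i j' ∉ X i j := fun hmem =>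
        (hXdisj i hne).le_bot ⟨hpX i j', hmem⟩
      simp [Set.indicator_of_notMem this]
    · intro h; exact absurd (Finset.mem_univ j) h
  have hνuniv : ∀ i, ν i Set.univ = 1 := by
    intro i
    rw [hνapp]
    simp only [Set.indicator_univ, Pi.one_apply, mul_one]
    rw [← ENNReal.ofReal_sum_of_nonneg (fun j _ => hM0 i j), hM1 i,
      ENNReal.ofReal_one]
  have hprob : ∀ i, IsProbabilityMeasure (ν i) := fun i => ⟨hνuniv i⟩
  have hνC : ∀ i, ν i (C i) = ∑ j, if X i j ⊆ C i then ENNReal.ofReal (M i j) else 0 := by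
    intro i
    rw [hνapp]
    refine Finset.sum_congr rfl fun j _ => ?_
    by_cases h : X i j ⊆ C i
    · simp [h, Set.indicator_of_mem (h (hpX i j))]
    · simp [h, Set.indicator_of_notMem (hpC i j h)]
  refine le_antisymm ?_ ?_
  · -- infimum ≤ value at ν
    haveI := hprob
    have hmem : Measure.pi ν ∈ {μ : Measure (∀ i, Ω i) | ∃ ν' : ∀ i, Measure (Ω i),
        (∀ i, IsProbabilityMeasure (ν' i)) ∧
        (∀ i j, ν' i (X i j) = ENNReal.ofReal (M i j)) ∧
        μ = Measure.pi ν'} := ⟨ν, hprob, hνX, rfl⟩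
    refine le_trans (iInf₂_le (Measure.pi ν) hmem) ?_
    rw [Measure.pi_pi]
    exact le_of_eq (Finset.prod_congr rfl fun i _ => hνC i)
  · -- lower bound for every member
    refine le_iInf₂ fun μ hμ => ?_
    obtain ⟨ν', hprob', hν'X, rfl⟩ := hμ
    haveI := hprob'
    rw [Measure.pi_pi]
    refine Finset.prod_le_prod' fun i _ => ?_
    have key : ∑ j, (if X i j ⊆ C i then ENNReal.ofReal (M i j) else 0)
        = ν' i (⋃ j ∈ Finset.univ.filter (fun j => X i j ⊆ C i), X i j) := by
      rw [measure_biUnion_finset]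
      · rw [← Finset.sum_filter]
        exact Finset.sum_congr rfl fun j _ => (hν'X i j).symm
      · intro a ha b hb hab
        exact hXdisj i hab
      · exact fun j _ => hXmeas i j
    rw [key]
    refine measure_mono ?_
    intro x hx
    simp only [Set.mem_iUnion] at hx
    obtain ⟨j, hj, hxj⟩ := hx
    simp only [Finset.mem_filter] at hj
    exact hj.2 hxj
end
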